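/- arXiv:2503.21245 — 2 statements merged into one kernel-verified Lean document; each statement's English description precedes it below -/
import Mathlib

section
/- Let $W, M : (0,\infty) \to [0,\infty)$ be differentiable functions with $W$ nondecreasing, and suppose that $\partial_r W(r) \geq 2r\big(\partial_r \sqrt{M(r)}\big)^2$ for all $r > 0$ (where $\sqrt{M}$ is differentiable). Then for every $r > 0$ and every $\eta \in (0,1)$, $M(r) \leq |\log\eta|\,\big(W(r) - W(\eta r)\big) + 2\,M(\eta r)$. -/
/-- Abstract Monneau–Weiss inequality with logarithmic error. -/
theorem statement1 (W M : ℝ → ℝ)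
    (hW0 : ∀ r > (0:ℝ), 0 ≤ W r) (hM0 : ∀ r > (0:ℝ), 0 ≤ M r)
    (hWdiff : ∀ r > (0:ℝ), DifferentiableAt ℝ W r)
    (hMdiff : ∀ r > (0:ℝ), DifferentiableAt ℝ M r)
    (hsqrtdiff : ∀ r > (0:ℝ), DifferentiableAt ℝ (fun s => Real.sqrt (M s)) r)
    (hWmono : MonotoneOn W (Set.Ioi 0))
    (hineq : ∀ r > (0:ℝ), 2 * r * (deriv (fun s => Real.sqrt (M s)) r) ^ 2 ≤ deriv W r) :
    ∀ r > (0:ℝ), ∀ η ∈ Set.Ioo (0:ℝ) 1,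
      M r ≤ |Real.log η| * (W r - W (η * r)) + 2 * M (η * r) := by
  intro r hr η hη
  obtain ⟨hη0, hη1⟩ := hη
  have hηr : 0 < η * r := mul_pos hη0 hr
  set a := Real.log (η * r) with ha
  set b := Real.log r with hb
  have hab : a < b := Real.log_lt_log hηr (by nlinarith)
  set u : ℝ → ℝ := fun s => Real.sqrt (M (Real.exp s)) with hu
  set V : ℝ → ℝ := fun s => W (Real.exp s) / 2 with hV
  have hudiff : ∀ s : ℝ, DifferentiableAt ℝ u s := fun s =>
    (hsqrtdiff _ (Real.exp_pos s)).comp s Real.differentiableAt_exp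
  have hVdiff : ∀ s : ℝ, DifferentiableAt ℝ V s := fun s =>
    ((hWdiff _ (Real.exp_pos s)).comp s Real.differentiableAt_exp).div_const 2
  have hderivu : ∀ s : ℝ, deriv u s
      = deriv (fun t => Real.sqrt (M t)) (Real.exp s) * Real.exp s := by
    intro s
    have := deriv_comp (x := s) (hsqrtdiff _ (Real.exp_pos s)) Real.differentiableAt_exp
    simpa [Function.comp_def, Real.deriv_exp, hu] using this
  have hderivV : ∀ s : ℝ, deriv V s = deriv W (Real.exp s) * Real.exp s / 2 := by
    intro s
    have h := deriv_comp (x := s) (hWdiff _ (Real.exp_pos s)) Real.differentiableAt_exp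
    have : deriv V s = deriv (fun t => W (Real.exp t)) s / 2 := by
      rw [hV]
      simp [deriv_div_const]
    rw [this]
    simp only [Function.comp_def, Real.deriv_exp] at h
    rw [h]
  have hkey : ∀ s : ℝ, (deriv u s) ^ 2 ≤ deriv V s := by
    intro s
    have h1 := hineq (Real.exp s) (Real.exp_pos s)
    have he := Real.exp_pos s
    rw [hderivu, hderivV]
    nlinarith [sq_nonneg (deriv (fun t => Real.sqrt (M t)) (Real.exp s)), he.le]
  set A := u a with hA
  -- main estimate with ε
  have hmain : ∀ ε : ℝ, 0 < ε → (u b - A) ^ 2 ≤ (b - a + ε) * (V b - V a) := by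
    intro ε hε
    set H : ℝ → ℝ := fun s => V s - (u s - A) ^ 2 / (s - a + ε) with hH
    have hmono : MonotoneOn H (Set.Icc a b) := by
      apply monotoneOn_of_deriv_nonneg (convex_Icc a b)
      · intro x hx
        have hden : x - a + ε ≠ 0 := by
          have := hx.1; exact ne_of_gt (by linarith)
        exact ((hVdiff x).sub ((((hudiff x).sub_const A).pow 2).div
          (((differentiableAt_fun_id).sub_const a).add_const ε)
          hden)).continuousAt.continuousWithinAt
      · intro x hx
        rw [interior_Icc] at hx
        have hden : x - a + ε ≠ 0 := by
          have := hx.1; exact ne_of_gt (by linarith)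
        exact ((hVdiff x).sub ((((hudiff x).sub_const A).pow 2).div
          (((differentiableAt_fun_id).sub_const a).add_const ε) hden)).differentiableWithinAt
      · intro x hx
        rw [interior_Icc] at hx
        have hxa : a < x := hx.1
        have hden : 0 < x - a + ε := by linarith
        have hu' : HasDerivAt u (deriv u x) x := (hudiff x).hasDerivAt
        have hV' : HasDerivAt V (deriv V x) x := (hVdiff x).hasDerivAt
        have h2 : HasDerivAt (fun s => (u s - A) ^ 2)
            (2 * (u x - A) ^ 1 * deriv u x) x := by
          simpa using (hu'.sub_const A).fun_pow 2
        have h3 : HasDerivAt (fun s => s - a + ε) 1 x := by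
          simpa using ((hasDerivAt_id x).sub_const a).add_const ε
        have h4 : HasDerivAt (fun s => (u s - A) ^ 2 / (s - a + ε))
            ((2 * (u x - A) ^ 1 * deriv u x * (x - a + ε) - (u x - A) ^ 2 * 1)
              / (x - a + ε) ^ 2) x := h2.div h3 (ne_of_gt hden)
        have h5 : HasDerivAt H (deriv V x -
            (2 * (u x - A) ^ 1 * deriv u x * (x - a + ε) - (u x - A) ^ 2 * 1)
              / (x - a + ε) ^ 2) x := hV'.sub h4
        rw [h5.deriv]
        have hq : (2 * (u x - A) ^ 1 * deriv u x * (x - a + ε) - (u x - A) ^ 2 * 1)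
              / (x - a + ε) ^ 2 ≤ deriv V x := by
          rw [div_le_iff₀ (by positivity)]
          nlinarith [sq_nonneg (deriv u x * (x - a + ε) - (u x - A)), hkey x, sq_nonneg (x - a + ε)]
        linarith
    have h6 := hmono (Set.left_mem_Icc.2 hab.le) (Set.right_mem_Icc.2 hab.le) hab.le
    have hHa : H a = V a := by simp [hH, hA]
    have hHb : H b = V b - (u b - A) ^ 2 / (b - a + ε) := rfl
    rw [hHa, hHb] at h6
    have hden : 0 < b - a + ε := by linarith
    have h7 : (u b - A) ^ 2 / (b - a + ε) ≤ V b - V a := by linarith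
    rw [div_le_iff₀ hden] at h7
    linarith
  have hVab : V a ≤ V b := by
    have : W (η * r) ≤ W r := by
      apply hWmono (Set.mem_Ioi.2 hηr) (Set.mem_Ioi.2 hr)
      nlinarith
    simp only [hV, ha, hb, Real.exp_log hηr, Real.exp_log hr]
    linarith
  have hfinal : (u b - A) ^ 2 ≤ (b - a) * (V b - V a) := by
    apply le_of_forall_pos_le_add
    intro ε₀ hε₀
    have hD : 0 ≤ V b - V a := by linarith
    set ε := ε₀ / (V b - V a + 1) with hε
    have hεpos : 0 < ε := div_pos hε₀ (by linarith)
    have := hmain ε hεpos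
    have h7 : ε * (V b - V a) ≤ ε₀ := by
      rw [hε, div_mul_eq_mul_div, div_le_iff₀ (by linarith)]
      nlinarith
    nlinarith
  have hba : b - a = |Real.log η| := by
    have hlog : Real.log η < 0 := Real.log_neg hη0 hη1
    rw [abs_of_neg hlog, ha, hb, Real.log_mul (ne_of_gt hη0) (ne_of_gt hr)]
    ring
  have hub : u b = Real.sqrt (M r) := by simp only [hu, hb, Real.exp_log hr]
  have hua : A = Real.sqrt (M (η * r)) := by simp only [hA, hu, ha, Real.exp_log hηr]
  have hMr : Real.sqrt (M r) ^ 2 = M r := Real.sq_sqrt (hM0 r hr)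
  have hMηr : Real.sqrt (M (η * r)) ^ 2 = M (η * r) := Real.sq_sqrt (hM0 _ hηr)
  have hVb : V b = W r / 2 := by simp only [hV, hb, Real.exp_log hr]
  have hVa : V a = W (η * r) / 2 := by simp only [hV, ha, Real.exp_log hηr]
  rw [hub, hua, hVb, hVa, hba] at hfinal
  nlinarith [hfinal, hMr, hMηr,
    sq_nonneg (Real.sqrt (M r) - 2 * Real.sqrt (M (η * r)))]
end

section
/- Let $p \geq 16$ be fixed, let $\Lambda > 0$ be large, set $K = \mathbb{N} \cap [\tfrac14\log_2\Lambda, \log_2\Lambda - 5]$, and let $\Theta : [2, \Lambda/2] \to [0,\infty)$ be a nondecreasing function satisfying the cubic growth bound $\Theta(r) \leq C_0\,\Theta(2)\,r^3$ for all $4 \leq r \leq \Lambda/2$, with $\Theta(2) > 0$. Then, provided $\Lambda$ is large enough depending only on $C_0$ and $p$, there exists $r \in (\Lambda^{1/4}, \Lambda/8)$ of the form $r = 2^{\ell/p}$ with $\ell \in \mathbb{N}$, and an index $k \in K$ with $r \in [2^{k+1}, 2^{k+2}]$, such that simultaneously: (i) $\Theta(2^{1/p} r) \leq 2\,\Theta(r)$,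 and (ii) $\frac{\Theta(2^{k+1}) - \Theta(2^k)}{2^{2k}} \geq M$, where $M$ is the median of the values $\{\frac{\Theta(2^{j+1}) - \Theta(2^j)}{2^{2j}} : j \in K\}$. -/
/-- Auxiliary pigeonhole fact: at least half of the elements `k` of a finite set `K`
satisfy: at least half of `j ∈ K` have `A j ≤ A k`. -/
lemma statement12_half_filter (K : Finset ℕ) (A : ℕ → ℝ) :
    K.card ≤ 2 * (K.filter (fun k => K.card ≤ 2 * (K.filter (fun j => A j ≤ A k)).card)).card := by
  set S := K.filter (fun k => K.card ≤ 2 * (K.filter (fun j => A j ≤ A k)).card) with hSdef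
  have hsub : S ⊆ K := Finset.filter_subset _ _
  have hcards : (K \ S).card + S.card = K.card := Finset.card_sdiff_add_card_eq_card hsub
  rcases (K \ S).eq_empty_or_nonempty with hT | hT
  · rw [hT] at hcards; simp at hcards; omega
  · obtain ⟨t, htT, hmax⟩ := (K \ S).exists_max_image A hT
    have htK : t ∈ K := (Finset.mem_sdiff.mp htT).1
    have htS : t ∉ S := (Finset.mem_sdiff.mp htT).2
    have ht' : ¬ (K.card ≤ 2 * (K.filter (fun j => A j ≤ A t)).card) := by
      intro h; exact htS (Finset.mem_filter.mpr ⟨htK, h⟩)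
    have h1 : (K \ S) ⊆ K.filter (fun j => A j ≤ A t) := by
      intro x hx
      exact Finset.mem_filter.mpr ⟨(Finset.mem_sdiff.mp hx).1, hmax x hx⟩
    have h2 := Finset.card_le_card h1
    omega

/-- Pigeonhole/doubling lemma: for a nondecreasing function `Θ` with cubic growth on
`[2, Λ/2]`, for `Λ` large one finds a dyadic-type scale `r = 2^(ℓ/p) ∈ (Λ^{1/4}, Λ/8)` at which
`Θ` doubles at most, lying in a dyadic annulus `[2^{k+1}, 2^{k+2}]` whose increment
`a k = (Θ(2^{k+1}) - Θ(2^k))/2^{2k}` is at least the median `M` of `{a j : j ∈ K}`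
(encoded as: at least half of the indices `j ∈ K` satisfy `a j ≤ a k`). -/
theorem statement12 (p : ℕ) (hp : 16 ≤ p) (C0 : ℝ) (hC0 : 0 < C0) :
    ∃ Λ0 : ℝ, ∀ Λ : ℝ, Λ0 ≤ Λ →
      ∀ Θ : ℝ → ℝ,
        MonotoneOn Θ (Set.Icc 2 (Λ / 2)) →
        0 < Θ 2 →
        (∀ r : ℝ, 4 ≤ r → r ≤ Λ / 2 → Θ r ≤ C0 * Θ 2 * r ^ 3) →
        ∃ ℓ k : ℕ,
          let r : ℝ := (2 : ℝ) ^ ((ℓ : ℝ) / (p : ℝ))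
          let K : Finset ℕ := Finset.Icc ⌈Real.logb 2 Λ / 4⌉₊ ⌊Real.logb 2 Λ - 5⌋₊
          let A : ℕ → ℝ := fun j => (Θ ((2:ℝ) ^ (j + 1)) - Θ ((2:ℝ) ^ j)) / (2:ℝ) ^ (2 * j)
          Λ ^ ((4 : ℝ)⁻¹) < r ∧ r < Λ / 8 ∧
          k ∈ K ∧
          (2:ℝ) ^ (k + 1) ≤ r ∧ r ≤ (2:ℝ) ^ (k + 2) ∧
          Θ ((2 : ℝ) ^ ((p : ℝ)⁻¹) * r) ≤ 2 * Θ r ∧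
          K.card ≤ 2 * (K.filter (fun j => A j ≤ A k)).card := by
  have h2pos : (0:ℝ) < 2 := two_pos
  have hp0 : (0:ℝ) < (p:ℝ) := by
    have h0 : 0 < p := by omega
    exact_mod_cast h0
  refine ⟨2 ^ (64:ℕ) * (C0 + 1), ?_⟩
  intro Λ hΛ Θ hmono hΘ2 hcubic
  set L := Real.logb 2 Λ with hLdef
  have hC01 : (1:ℝ) ≤ C0 + 1 := by linarith
  have hΛ64 : (2:ℝ) ^ (64:ℕ) ≤ Λ :=
    le_trans (le_mul_of_one_le_right (by positivity) hC01) hΛ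
  have hΛpos : 0 < Λ := lt_of_lt_of_le (by positivity) hΛ64
  have hΛeq : (2:ℝ) ^ L = Λ := Real.rpow_logb h2pos (by norm_num) hΛpos
  have hlog64 : Real.logb 2 ((2:ℝ) ^ (64:ℕ)) = 64 := by
    rw [show ((2:ℝ) ^ (64:ℕ)) = (2:ℝ) ^ ((64:ℕ):ℝ) from (Real.rpow_natCast 2 64).symm,
      Real.logb_rpow h2pos (by norm_num)]
    norm_num
  have h64L : (64:ℝ) + Real.logb 2 (C0+1) ≤ L := by
    have h1 : Real.logb 2 ((2:ℝ) ^ (64:ℕ) * (C0+1)) ≤ L :=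
      Real.logb_le_logb_of_le one_lt_two (by positivity) hΛ
    rwa [Real.logb_mul (by positivity) (by positivity), hlog64] at h1
  have hlognn : 0 ≤ Real.logb 2 (C0+1) := Real.logb_nonneg one_lt_two hC01
  have hL64 : (64:ℝ) ≤ L := by linarith
  have hC0le : Real.logb 2 C0 ≤ L - 64 := by
    have := Real.logb_le_logb_of_le one_lt_two hC0 (show C0 ≤ C0 + 1 by linarith)
    linarith
  set k0 := ⌈L/4⌉₊ with hk0def
  set kM := ⌊L - 5⌋₊ with hkMdef
  have hL5 : (0:ℝ) ≤ L - 5 := by linarith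
  have hkMle : (kM:ℝ) ≤ L - 5 := Nat.floor_le hL5
  have hkMgt : L - 6 < (kM:ℝ) := by
    have h : L - 5 - 1 < (kM:ℝ) := Nat.sub_one_lt_floor (L - 5)
    linarith
  have hk0ge : L/4 ≤ (k0:ℝ) := Nat.le_ceil _
  have hk0lt : (k0:ℝ) < L/4 + 1 := Nat.ceil_lt_add_one (by linarith)
  have hk0kM : k0 < kM := by
    have : (k0:ℝ) < (kM:ℝ) := by linarith
    exact_mod_cast this
  -- domain facts
  have hΛ2 : Λ / 2 = (2:ℝ) ^ (L - 1) := by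
    rw [Real.rpow_sub h2pos, Real.rpow_one, hΛeq]
  have hdom : ∀ x : ℝ, 1 ≤ x → x ≤ L - 3 → (2:ℝ) ^ x ∈ Set.Icc (2:ℝ) (Λ/2) := by
    intro x h1 h2
    constructor
    · calc (2:ℝ) = 2 ^ (1:ℝ) := (Real.rpow_one 2).symm
        _ ≤ 2 ^ x := Real.rpow_le_rpow_of_exponent_le one_le_two h1
    · rw [hΛ2]; exact Real.rpow_le_rpow_of_exponent_le one_le_two (by linarith)
  have hmono' : ∀ x y : ℝ, 1 ≤ x → x ≤ y → y ≤ L - 3 → Θ ((2:ℝ)^x) ≤ Θ ((2:ℝ)^y) :=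
    fun x y hx hxy hy =>
      hmono (hdom x hx (by linarith)) (hdom y (by linarith) hy)
        (Real.rpow_le_rpow_of_exponent_le one_le_two hxy)
  set K : Finset ℕ := Finset.Icc k0 kM with hKdef
  set A : ℕ → ℝ := fun j => (Θ ((2:ℝ) ^ (j + 1)) - Θ ((2:ℝ) ^ j)) / (2:ℝ) ^ (2 * j) with hAdef
  set S : Finset ℕ := K.filter (fun k => K.card ≤ 2 * (K.filter (fun j => A j ≤ A k)).card)
    with hSdef
  have hhalf : K.card ≤ 2 * S.card := statement12_half_filter K A
  have hSK : S ⊆ K := Finset.filter_subset _ _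
  by_contra hcon
  -- from ¬∃, every admissible scale in an annulus of S fails the doubling bound
  have key : ∀ m ∈ S, ∀ ℓ : ℕ, p * (m+1) ≤ ℓ → ℓ < p * (m+2) →
      2 * Θ ((2:ℝ) ^ ((ℓ:ℝ)/(p:ℝ))) < Θ ((2:ℝ) ^ ((p:ℝ)⁻¹) * (2:ℝ) ^ ((ℓ:ℝ)/(p:ℝ))) := by
    intro m hmS ℓ hℓ1 hℓ2
    by_contra hdb
    push_neg at hdb
    have hmK : m ∈ K := hSK hmS
    obtain ⟨hmlo, hmhi⟩ := Finset.mem_Icc.mp hmK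
    have hmlo' : L/4 ≤ (m:ℝ) := le_trans hk0ge (by exact_mod_cast hmlo)
    have hmhi' : (m:ℝ) ≤ L - 5 := le_trans (by exact_mod_cast hmhi) hkMle
    have hple : ((m:ℝ)+1) ≤ (ℓ:ℝ)/(p:ℝ) := by
      rw [le_div_iff₀ hp0]
      have : ((p * (m+1) : ℕ):ℝ) ≤ (ℓ:ℝ) := by exact_mod_cast hℓ1
      push_cast at this ⊢
      linarith
    have hpge : (ℓ:ℝ)/(p:ℝ) ≤ (m:ℝ)+2 - 1/(p:ℝ) := by
      rw [div_le_iff₀ hp0]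
      have : (ℓ:ℝ) + 1 ≤ ((p * (m+2) : ℕ):ℝ) := by exact_mod_cast hℓ2
      push_cast at this ⊢
      field_simp
      linarith
    have hppos : 0 < 1/(p:ℝ) := by positivity
    refine hcon ⟨ℓ, m, ?_, ?_, hmK, ?_, ?_, hdb, (Finset.mem_filter.mp hmS).2⟩
    · -- Λ^(1/4) < r
      rw [← hΛeq, ← Real.rpow_mul (le_of_lt h2pos)]
      exact Real.rpow_lt_rpow_of_exponent_lt one_lt_two (by linarith)
    · -- r < Λ/8
      have h8 : Λ / 8 = (2:ℝ) ^ (L - 3) := by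
        rw [Real.rpow_sub h2pos, hΛeq,
          show ((2:ℝ) ^ (3:ℝ)) = 8 by
            rw [show ((3:ℝ)) = ((3:ℕ):ℝ) by norm_num, Real.rpow_natCast]; norm_num]
      rw [h8]
      exact Real.rpow_lt_rpow_of_exponent_lt one_lt_two (by linarith)
    · -- 2^(m+1) ≤ r
      rw [show ((2:ℝ) ^ (m+1)) = (2:ℝ) ^ (((m+1:ℕ)):ℝ) from (Real.rpow_natCast 2 (m+1)).symm]
      apply Real.rpow_le_rpow_of_exponent_le one_le_two
      push_cast
      linarith
    · -- r ≤ 2^(m+2)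
      rw [show ((2:ℝ) ^ (m+2)) = (2:ℝ) ^ (((m+2:ℕ)):ℝ) from (Real.rpow_natCast 2 (m+2)).symm]
      apply Real.rpow_le_rpow_of_exponent_le one_le_two
      push_cast
      linarith
  -- doubling across one annulus
  have annulus : ∀ m ∈ S, (2:ℝ)^p * Θ ((2:ℝ)^((m:ℝ)+1)) ≤ Θ ((2:ℝ)^((m:ℝ)+2)) := by
    intro m hmS
    have main : ∀ i : ℕ, i ≤ p →
        (2:ℝ)^i * Θ ((2:ℝ)^((m:ℝ)+1)) ≤ Θ ((2:ℝ) ^ (((p*(m+1)+i : ℕ):ℝ)/(p:ℝ))) := by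
      intro i
      induction i with
      | zero =>
        intro _
        rw [show (((p*(m+1)+0 : ℕ):ℝ)/(p:ℝ)) = (m:ℝ)+1 by push_cast; field_simp; ring]
        simp
      | succ i ih =>
        intro hi
        have h1 := ih (by omega)
        have h2 := key m hmS (p*(m+1)+i) (Nat.le_add_right _ _)
          (by
            have hpe : p*(m+2) = p*(m+1)+p := by ring
            omega)
        have h3 : (2:ℝ)^((p:ℝ)⁻¹) * (2:ℝ)^(((p*(m+1)+i : ℕ):ℝ)/(p:ℝ))
            = (2:ℝ)^(((p*(m+1)+(i+1) : ℕ):ℝ)/(p:ℝ)) := by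
          rw [← Real.rpow_add h2pos]
          congr 1
          push_cast
          field_simp
          ring
        rw [h3] at h2
        have hpow : ((2:ℝ)^(i+1)) = 2 * (2:ℝ)^i := by ring
        rw [hpow, mul_assoc]
        have hnn : (0:ℝ) ≤ 2 := by norm_num
        calc 2 * ((2:ℝ)^i * Θ ((2:ℝ)^((m:ℝ)+1)))
            ≤ 2 * Θ ((2:ℝ) ^ (((p*(m+1)+i : ℕ):ℝ)/(p:ℝ))) := by linarith
          _ ≤ Θ ((2:ℝ) ^ (((p*(m+1)+(i+1) : ℕ):ℝ)/(p:ℝ))) := le_of_lt h2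
    have h := main p le_rfl
    rwa [show (((p*(m+1)+p : ℕ):ℝ)/(p:ℝ)) = (m:ℝ)+2 by push_cast; field_simp; ring] at h
  -- chain across all annuli of S
  have chain : ∀ m : ℕ, k0 ≤ m → m ≤ kM + 1 →
      (2:ℝ) ^ (p * (S.filter (fun j => j < m)).card) * Θ 2 ≤ Θ ((2:ℝ) ^ ((m:ℝ)+1)) := by
    intro m hm
    induction m, hm using Nat.le_induction with
    | base =>
      intro _
      have hfe : S.filter (fun j => j < k0) = ∅ := by
        apply Finset.filter_eq_empty_iff.mpr
        intro j hj
        have := (Finset.mem_Icc.mp (hSK hj)).1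
        omega
      rw [hfe]
      simp only [Finset.card_empty, Nat.mul_zero, pow_zero, one_mul]
      have h1 : Θ ((2:ℝ)^(1:ℝ)) ≤ Θ ((2:ℝ)^((k0:ℝ)+1)) := by
        have hk0nn : (0:ℝ) ≤ (k0:ℝ) := Nat.cast_nonneg _
        apply hmono' 1 ((k0:ℝ)+1) le_rfl (by linarith) (by linarith)
      rwa [Real.rpow_one] at h1
    | succ m hm ih =>
      intro hm1
      have hmkM : m ≤ kM := by omega
      have hmR : (m:ℝ) ≤ L - 5 := le_trans (by exact_mod_cast hmkM) hkMle
      have ih' := ih (by omega)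
      have hexp : ((m+1:ℕ):ℝ) + 1 = (m:ℝ) + 2 := by push_cast; ring
      rw [hexp]
      by_cases hmS : m ∈ S
      · have hins : S.filter (fun j => j < m+1) = insert m (S.filter (fun j => j < m)) := by
          ext j
          simp only [Finset.mem_filter, Finset.mem_insert, Nat.lt_succ_iff_lt_or_eq]
          constructor
          · rintro ⟨hjS, hj | rfl⟩
            · exact Or.inr ⟨hjS, hj⟩
            · exact Or.inl rfl
          · rintro (rfl | ⟨hjS, hj⟩)
            · exact ⟨hmS, Or.inr rfl⟩
            · exact ⟨hjS, Or.inl hj⟩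
        have hnot : m ∉ S.filter (fun j => j < m) := by
          simp
        rw [hins, Finset.card_insert_of_notMem hnot]
        have hpm : (2:ℝ) ^ (p * ((S.filter (fun j => j < m)).card + 1))
            = (2:ℝ)^p * (2:ℝ) ^ (p * (S.filter (fun j => j < m)).card) := by
          rw [Nat.mul_add, Nat.mul_one, pow_add, mul_comm]
        rw [hpm, mul_assoc]
        calc (2:ℝ)^p * ((2:ℝ) ^ (p * (S.filter (fun j => j < m)).card) * Θ 2)
            ≤ (2:ℝ)^p * Θ ((2:ℝ)^((m:ℝ)+1)) := by
              have h2p : (0:ℝ) ≤ (2:ℝ)^p := by positivity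
              exact mul_le_mul_of_nonneg_left ih' h2p
          _ ≤ Θ ((2:ℝ)^((m:ℝ)+2)) := annulus m hmS
      · have heq : S.filter (fun j => j < m+1) = S.filter (fun j => j < m) := by
          ext j
          simp only [Finset.mem_filter, Nat.lt_succ_iff_lt_or_eq]
          constructor
          · rintro ⟨hjS, hj | rfl⟩
            · exact ⟨hjS, hj⟩
            · exact absurd hjS hmS
          · rintro ⟨hjS, hj⟩
            exact ⟨hjS, Or.inl hj⟩
        rw [heq]
        calc (2:ℝ) ^ (p * (S.filter (fun j => j < m)).card) * Θ 2
            ≤ Θ ((2:ℝ)^((m:ℝ)+1)) := ih'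
          _ ≤ Θ ((2:ℝ)^((m:ℝ)+2)) := by
              have hmnn : (0:ℝ) ≤ (m:ℝ) := Nat.cast_nonneg _
              apply hmono' ((m:ℝ)+1) ((m:ℝ)+2) (by linarith) (by linarith) (by linarith)
  have hfin := chain (kM+1) (by omega) le_rfl
  have hSfull : S.filter (fun j => j < kM+1) = S := by
    apply Finset.filter_true_of_mem
    intro j hj
    have := (Finset.mem_Icc.mp (hSK hj)).2
    omega
  rw [hSfull, show ((kM+1:ℕ):ℝ)+1 = (kM:ℝ)+2 by push_cast; ring] at hfin
  -- cubic growth bound at the top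
  have hr4 : (4:ℝ) ≤ (2:ℝ)^((kM:ℝ)+2) := by
    calc (4:ℝ) = (2:ℝ)^((2:ℕ):ℝ) := by rw [Real.rpow_natCast]; norm_num
      _ ≤ _ := Real.rpow_le_rpow_of_exponent_le one_le_two
        (by have : (0:ℝ) ≤ (kM:ℝ) := Nat.cast_nonneg _; push_cast; linarith)
  have hkMnn : (0:ℝ) ≤ (kM:ℝ) := Nat.cast_nonneg _
  have hrΛ : (2:ℝ)^((kM:ℝ)+2) ≤ Λ/2 := (hdom ((kM:ℝ)+2) (by linarith) (by linarith)).2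
  have hcub := hcubic _ hr4 hrΛ
  have hcube : ((2:ℝ)^((kM:ℝ)+2))^(3:ℕ) = (2:ℝ)^(((kM:ℝ)+2)*3) := by
    rw [Real.rpow_mul (le_of_lt h2pos), ← Real.rpow_natCast ((2:ℝ)^((kM:ℝ)+2)) 3]
    norm_num
  have hC0eq : C0 = (2:ℝ)^(Real.logb 2 C0) := (Real.rpow_logb h2pos (by norm_num) hC0).symm
  have hub : Θ ((2:ℝ)^((kM:ℝ)+2)) ≤ Θ 2 * (2:ℝ)^(Real.logb 2 C0 + ((kM:ℝ)+2)*3) := by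
    calc Θ ((2:ℝ)^((kM:ℝ)+2)) ≤ C0 * Θ 2 * ((2:ℝ)^((kM:ℝ)+2))^(3:ℕ) := hcub
      _ = Θ 2 * ((2:ℝ)^(Real.logb 2 C0) * (2:ℝ)^(((kM:ℝ)+2)*3)) := by
          rw [hcube, ← hC0eq]; ring
      _ = Θ 2 * (2:ℝ)^(Real.logb 2 C0 + ((kM:ℝ)+2)*3) := by rw [← Real.rpow_add h2pos]
  -- lower bound on the exponent
  have hcard : K.card = kM + 1 - k0 := Nat.card_Icc k0 kM
  have hcardR : (3/4) * L - 6 ≤ (K.card:ℝ) := by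
    have : (K.card:ℝ) = (kM:ℝ) + 1 - (k0:ℝ) := by
      rw [hcard]
      have : k0 ≤ kM + 1 := by omega
      push_cast [Nat.cast_sub this]
      ring
    rw [this]
    linarith
  have hnat : 8 * K.card ≤ p * S.card := by
    calc 8 * K.card ≤ 8 * (2 * S.card) := by omega
      _ = 16 * S.card := by ring
      _ ≤ p * S.card := Nat.mul_le_mul_right _ hp
  have hexpR : 6 * L - 48 ≤ ((p * S.card : ℕ):ℝ) := by
    have h1 : (8:ℝ) * (K.card:ℝ) ≤ ((p * S.card : ℕ):ℝ) := by exact_mod_cast hnat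
    linarith
  have hlb : (2:ℝ)^(6*L - 48) ≤ (2:ℝ)^(p * S.card) := by
    rw [← Real.rpow_natCast 2 (p * S.card)]
    exact Real.rpow_le_rpow_of_exponent_le one_le_two hexpR
  have hstrict : (2:ℝ)^(Real.logb 2 C0 + ((kM:ℝ)+2)*3) < (2:ℝ)^(6*L - 48) := by
    apply Real.rpow_lt_rpow_of_exponent_lt one_lt_two
    linarith
  have hfinal : (2:ℝ)^(6*L-48) * Θ 2 ≤ Θ 2 * (2:ℝ)^(Real.logb 2 C0 + ((kM:ℝ)+2)*3) := by
    calc (2:ℝ)^(6*L-48) * Θ 2 ≤ (2:ℝ)^(p * S.card) * Θ 2 := by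
          exact mul_le_mul_of_nonneg_right hlb (le_of_lt hΘ2)
      _ ≤ Θ ((2:ℝ)^((kM:ℝ)+2)) := hfin
      _ ≤ Θ 2 * (2:ℝ)^(Real.logb 2 C0 + ((kM:ℝ)+2)*3) := hub
  have := mul_lt_mul_of_pos_left hstrict hΘ2
  linarith
end
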